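/- Let K₄ = C₂ × C₂, V = V₁ ⊕ V₂ ⊕ V₃ the sum of its three nontrivial one-dimensional real sign representations, and n ≥ 0. The equivariant (Bredon) homology of the representation sphere S^{nV} with constant 𝔽₂ coefficients has total dimension over 𝔽₂ in degrees 0,1,…,3n given by the sequence 1, 3, 5, …, 2n−1, 2n+1, 2n, 2n−1, …, 2, 1 (odd numbers 1 to 2n+1, then descending integers 2n+1 down to 1, glued at 2n+1). -/

import Mathlib

/-! The mod-2 equivariant cellular chain complex of the `K₄ = C₂ × C₂`-representation sphere
`S^{nV}`, `V = V₁ ⊕ V₂ ⊕ V₃` the sum of the three sign representations, built from the smash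
of the standard cell structures on the `S^{nVᵢ}`.  In degree `t` there is one basis element
`(k,l,m)` for each triple `0 ≤ k,l,m ≤ n` with `k+l+m = t`, together with a second copy
`λ(k,l,m)` when `k,l,m > 0`; the mod‑2 boundary is
`∂(k,l,m) = (1+λ)((k−1,l,m) + (k,l−1,m) + (k,l,m−1))` when `k,l,m > 0` and `0` otherwise. -/

/-- Cells of the complex in degree `t`: a triple `(k,l,m)` with entries `≤ n` summing to `t`,
and a `Bool` marking the `λ`-copy, which exists only when all of `k,l,m` are positive. -/
def K4Cell (n t : ℕ) : Type :=
  {c : (Fin (n + 1) × Fin (n + 1) × Fin (n + 1)) × Bool //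
    ((c.1.1 : ℕ) + (c.1.2.1 : ℕ) + (c.1.2.2 : ℕ) = t) ∧
    (c.2 = true → 0 < (c.1.1 : ℕ) ∧ 0 < (c.1.2.1 : ℕ) ∧ 0 < (c.1.2.2 : ℕ))}

instance (n t : ℕ) : Fintype (K4Cell n t) := by
  unfold K4Cell; infer_instance

/-- The source cell has all coordinates positive, and the target cell is obtained from it by
decrementing exactly one coordinate. -/
def K4IsFace {n t : ℕ} (c' : K4Cell n (t + 1)) (c : K4Cell n t) : Prop :=
  (0 < (c'.1.1.1 : ℕ) ∧ 0 < (c'.1.1.2.1 : ℕ) ∧ 0 < (c'.1.1.2.2 : ℕ)) ∧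
  (((c'.1.1.1 : ℕ) = (c.1.1.1 : ℕ) + 1 ∧ (c'.1.1.2.1 : ℕ) = (c.1.1.2.1 : ℕ) ∧
      (c'.1.1.2.2 : ℕ) = (c.1.1.2.2 : ℕ)) ∨
   ((c'.1.1.1 : ℕ) = (c.1.1.1 : ℕ) ∧ (c'.1.1.2.1 : ℕ) = (c.1.1.2.1 : ℕ) + 1 ∧
      (c'.1.1.2.2 : ℕ) = (c.1.1.2.2 : ℕ)) ∨
   ((c'.1.1.1 : ℕ) = (c.1.1.1 : ℕ) ∧ (c'.1.1.2.1 : ℕ) = (c.1.1.2.1 : ℕ) ∧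
      (c'.1.1.2.2 : ℕ) = (c.1.1.2.2 : ℕ) + 1))

open Classical in
/-- The mod-2 boundary map from degree `t+1` to degree `t`: a cell contributes to each of its
faces (both `λ`-copies when the face is interior, with the boundary of a cell having a zero
coordinate equal to `0`, as forced by the relation `λ(k,l,m) = (k,l,m)` when `klm = 0`). -/
noncomputable def K4Boundary (n t : ℕ) :
    (K4Cell n (t + 1) → ZMod 2) →ₗ[ZMod 2] (K4Cell n t → ZMod 2) :=
  Matrix.mulVecLin (fun c c' => if K4IsFace c' c then (1 : ZMod 2) else 0)

/-- Cycles in degree `t`. -/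
noncomputable def K4Cycles (n : ℕ) : (t : ℕ) → Submodule (ZMod 2) (K4Cell n t → ZMod 2)
  | 0 => ⊤
  | (t + 1) => LinearMap.ker (K4Boundary n t)

/-- Mod-2 Bredon homology `H_t^{K₄}(S^{nV}; 𝔽₂̲)`: cycles modulo boundaries. -/
noncomputable def K4Homology (n t : ℕ) : Type :=
  K4Cycles n t ⧸
    (Submodule.comap (K4Cycles n t).subtype (LinearMap.range (K4Boundary n t)))

noncomputable instance (n t : ℕ) : AddCommGroup (K4Homology n t) := by
  unfold K4Homology; infer_instance

noncomputable instance (n t : ℕ) : Module (ZMod 2) (K4Homology n t) := by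
  unfold K4Homology; infer_instance

section K4Aux
open Finset

-- helper lemmas
open Classical in
lemma bdry_apply (n s : ℕ) (x : K4Cell n (s+1) → ZMod 2) (c : K4Cell n s) :
    K4Boundary n s x c
      = ∑ c' : K4Cell n (s+1), (if K4IsFace c' c then (1:ZMod 2) else 0) * x c' := by
  change Matrix.mulVec (fun c c' => if K4IsFace c' c then (1 : ZMod 2) else 0) x c = _
  simp [K4Boundary, Matrix.mulVecLin_apply, Matrix.mulVec, dotProduct]

lemma isFace_congr_left {n s : ℕ} (c' d' : K4Cell n (s+1)) (c : K4Cell n s)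
    (h : c'.1.1 = d'.1.1) : K4IsFace c' c ↔ K4IsFace d' c := by
  unfold K4IsFace; rw [h]

lemma isFace_pos {n s : ℕ} {c' : K4Cell n (s+1)} {c : K4Cell n s} (h : K4IsFace c' c) :
    0 < (c'.1.1.1 : ℕ) ∧ 0 < (c'.1.1.2.1 : ℕ) ∧ 0 < (c'.1.1.2.2 : ℕ) := h.1

lemma bdry_triple (n s : ℕ) (x : K4Cell n (s+1) → ZMod 2) (c d : K4Cell n s)
    (h : c.1.1 = d.1.1) : K4Boundary n s x c = K4Boundary n s x d := by
  classical
  rw [bdry_apply, bdry_apply]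
  refine Finset.sum_congr rfl fun c' _ => ?_
  congr 1
  have : K4IsFace c' c ↔ K4IsFace c' d := by unfold K4IsFace; rw [h]
  exact if_congr this rfl rfl

def flipCell {n s : ℕ} (c : K4Cell n s) : K4Cell n s :=
  if h : 0 < (c.1.1.1 : ℕ) ∧ 0 < (c.1.1.2.1 : ℕ) ∧ 0 < (c.1.1.2.2 : ℕ) then
    ⟨(c.1.1, !c.1.2), ⟨c.2.1, fun _ => h⟩⟩
  else c

lemma flipCell_triple {n s : ℕ} (c : K4Cell n s) : (flipCell c).1.1 = c.1.1 := by
  by_cases h : 0 < (c.1.1.1 : ℕ) ∧ 0 < (c.1.1.2.1 : ℕ) ∧ 0 < (c.1.1.2.2 : ℕ)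
  · have h1 : flipCell c = ⟨(c.1.1, !c.1.2), ⟨c.2.1, fun _ => h⟩⟩ := dif_pos h
    rw [h1]
  · have h1 : flipCell c = c := dif_neg h
    rw [h1]

lemma flipCell_flipCell {n s : ℕ} (c : K4Cell n s) : flipCell (flipCell c) = c := by
  by_cases h : 0 < (c.1.1.1 : ℕ) ∧ 0 < (c.1.1.2.1 : ℕ) ∧ 0 < (c.1.1.2.2 : ℕ)
  · have h1 : flipCell c = ⟨(c.1.1, !c.1.2), ⟨c.2.1, fun _ => h⟩⟩ := dif_pos h
    have h2 : flipCell (⟨(c.1.1, !c.1.2), ⟨c.2.1, fun _ => h⟩⟩ : K4Cell n s)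
        = ⟨(c.1.1, !(!c.1.2)), ⟨c.2.1, fun _ => h⟩⟩ := dif_pos h
    rw [h1, h2]
    exact Subtype.ext (by simp)
  · have h1 : flipCell c = c := dif_neg h
    rw [h1, h1]

lemma flipCell_ne {n s : ℕ} (c : K4Cell n s)
    (h : 0 < (c.1.1.1 : ℕ) ∧ 0 < (c.1.1.2.1 : ℕ) ∧ 0 < (c.1.1.2.2 : ℕ)) : flipCell c ≠ c := by
  have h1 : flipCell c = ⟨(c.1.1, !c.1.2), ⟨c.2.1, fun _ => h⟩⟩ := dif_pos h
  rw [h1]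
  intro he
  have := congrArg (fun z => z.1.2) he
  simp at this

lemma zmod2_add_self (y : ZMod 2) : y + y = 0 := by revert y; decide

open Classical in
lemma bdry_bdry (n t : ℕ) (x : K4Cell n (t+2) → ZMod 2) :
    K4Boundary n t (K4Boundary n (t+1) x) = 0 := by
  funext c
  rw [Pi.zero_apply, bdry_apply]
  refine Finset.sum_ninvolution flipCell ?_ ?_ (fun a => Finset.mem_univ _) flipCell_flipCell
  · intro a
    have h1 : (if K4IsFace (flipCell a) c then (1:ZMod 2) else 0) = (if K4IsFace a c then (1:ZMod 2) else 0) :=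
      if_congr (isFace_congr_left _ _ _ (flipCell_triple a)) rfl rfl
    have h2 : K4Boundary n (t+1) x (flipCell a) = K4Boundary n (t+1) x a :=
      bdry_triple _ _ _ _ _ (flipCell_triple a)
    rw [h1, h2, zmod2_add_self]
  · intro a ha
    have hface : K4IsFace a c := by
      by_contra hf
      rw [if_neg hf, zero_mul] at ha
      exact ha rfl
    exact flipCell_ne a hface.1

lemma range_le_cycles (n t : ℕ) :
    LinearMap.range (K4Boundary n t) ≤ K4Cycles n t := by
  cases t with
  | zero => exact le_top
  | succ s =>
    rintro x ⟨y, rfl⟩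
    show K4Boundary n s (K4Boundary n (s+1) y) = 0
    exact bdry_bdry n s y

def IntT (n s : ℕ) : Type :=
  {p : Fin (n+1) × Fin (n+1) × Fin (n+1) //
    ((p.1:ℕ) + (p.2.1:ℕ) + (p.2.2:ℕ) = s) ∧ 0 < (p.1:ℕ) ∧ 0 < (p.2.1:ℕ) ∧ 0 < (p.2.2:ℕ)}

instance (n s : ℕ) : Fintype (IntT n s) := by unfold IntT; infer_instance

def basCell {n t : ℕ} (p : IntT n (t+1)) : K4Cell n (t+1) :=
  ⟨(p.1, false), ⟨p.2.1, by simp⟩⟩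

instance (n t : ℕ) : DecidableEq (K4Cell n t) := by unfold K4Cell; infer_instance

lemma single_eq_smul {n t : ℕ} (c' : K4Cell n t) (y : ZMod 2) :
    Pi.single c' y = y • (Pi.single c' (1:ZMod 2) : K4Cell n t → ZMod 2) := by
  funext c
  by_cases h : c = c'
  · subst h; simp
  · rw [Pi.single_eq_of_ne h, Pi.smul_apply, Pi.single_eq_of_ne h, smul_zero]

open Classical in
lemma bdry_single (n t : ℕ) (c₀ : K4Cell n (t+1)) :
    K4Boundary n t (Pi.single c₀ 1)
      = fun c => if K4IsFace c₀ c then (1:ZMod 2) else 0 := by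
  funext c
  rw [bdry_apply]
  rw [Finset.sum_eq_single c₀]
  · rw [Pi.single_eq_same, mul_one]
  · intro b _ hb
    rw [Pi.single_eq_of_ne hb, mul_zero]
  · intro h
    exact absurd (Finset.mem_univ c₀) h

open Classical in
lemma bdry_single_zero (n t : ℕ) (c₀ : K4Cell n (t+1))
    (h : ¬(0 < (c₀.1.1.1 : ℕ) ∧ 0 < (c₀.1.1.2.1 : ℕ) ∧ 0 < (c₀.1.1.2.2 : ℕ))) :
    K4Boundary n t (Pi.single c₀ 1) = 0 := by
  rw [bdry_single]
  funext c
  rw [if_neg (fun hf => h hf.1), Pi.zero_apply]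

noncomputable def vFam (n t : ℕ) (p : IntT n (t+1)) : K4Cell n t → ZMod 2 :=
  K4Boundary n t (Pi.single (basCell p) 1)

open Classical in
lemma range_eq_span (n t : ℕ) :
    LinearMap.range (K4Boundary n t) = Submodule.span (ZMod 2) (Set.range (vFam n t)) := by
  apply le_antisymm
  · rintro x ⟨y, rfl⟩
    have hy : y = ∑ c' : K4Cell n (t+1), Pi.single c' (y c') := (Finset.univ_sum_single y).symm
    rw [hy, map_sum]
    apply Submodule.sum_mem
    intro c' _
    by_cases hpos : 0 < (c'.1.1.1 : ℕ) ∧ 0 < (c'.1.1.2.1 : ℕ) ∧ 0 < (c'.1.1.2.2 : ℕ)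
    · have hp : ((c'.1.1.1:ℕ) + (c'.1.1.2.1:ℕ) + (c'.1.1.2.2:ℕ) = t + 1) := c'.2.1
      set p : IntT n (t+1) := ⟨c'.1.1, hp, hpos⟩ with hpdef
      rw [single_eq_smul, map_smul]
      apply Submodule.smul_mem
      apply Submodule.subset_span
      refine ⟨p, ?_⟩
      unfold vFam
      rw [bdry_single, bdry_single]
      funext c
      exact if_congr (isFace_congr_left _ _ _ (rfl : (basCell p).1.1 = c'.1.1)) rfl rfl
    · rw [single_eq_smul, map_smul, bdry_single_zero n t c' hpos, smul_zero]
      exact Submodule.zero_mem _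
  · rw [Submodule.span_le]
    rintro x ⟨p, rfl⟩
    exact ⟨Pi.single (basCell p) 1, by unfold vFam; rfl⟩

noncomputable def wt {n s : ℕ} (p : IntT n s) : ℕ := (n+2) * (p.1.1:ℕ) + (p.1.2.1:ℕ)

open Classical in
lemma vFam_indep (n t : ℕ) : LinearIndependent (ZMod 2) (vFam n t) := by
  rw [Fintype.linearIndependent_iff]
  intro g hg
  by_contra hne
  push_neg at hne
  have hSne : (Finset.univ.filter (fun p => g p ≠ 0)).Nonempty := by
    obtain ⟨i, hi⟩ := hne
    exact ⟨i, Finset.mem_filter.2 ⟨Finset.mem_univ i, hi⟩⟩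
  obtain ⟨p₀, hp₀S, hp₀max⟩ := Finset.exists_max_image _ wt hSne
  have hp₀ : g p₀ ≠ 0 := (Finset.mem_filter.1 hp₀S).2
  -- the evaluation cell : p₀ with third coordinate decremented
  have h3 : 0 < (p₀.1.2.2 : ℕ) := p₀.2.2.2.2
  have hlt : (p₀.1.2.2 : ℕ) - 1 < n + 1 := by omega
  have hsum0 : (p₀.1.1:ℕ) + (p₀.1.2.1:ℕ) + (p₀.1.2.2:ℕ) = t + 1 := p₀.2.1
  set c₀ : K4Cell n t := ⟨((p₀.1.1, p₀.1.2.1, ⟨(p₀.1.2.2:ℕ) - 1, hlt⟩), false),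
    ⟨by show (p₀.1.1:ℕ) + (p₀.1.2.1:ℕ) + ((p₀.1.2.2:ℕ) - 1) = t; omega, by simp⟩⟩ with hc₀
  have heval := congrFun hg c₀
  rw [Finset.sum_apply] at heval
  have hval : ∀ p : IntT n (t+1),
      vFam n t p c₀ = if K4IsFace (basCell p) c₀ then (1:ZMod 2) else 0 := by
    intro p
    unfold vFam
    rw [bdry_single]
  have hface₀ : K4IsFace (basCell p₀) c₀ := by
    refine ⟨⟨p₀.2.2.1, p₀.2.2.2.1, p₀.2.2.2.2⟩, Or.inr (Or.inr ⟨rfl, rfl, ?_⟩)⟩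
    show (p₀.1.2.2:ℕ) = (p₀.1.2.2:ℕ) - 1 + 1
    omega
  have hsum : (∑ p : IntT n (t+1), (g p • vFam n t p) c₀) = g p₀ := by
    rw [Finset.sum_eq_single p₀]
    · rw [Pi.smul_apply, hval, if_pos hface₀, smul_eq_mul, mul_one]
    · intro p _ hpne
      rw [Pi.smul_apply, hval]
      by_cases hgp : g p = 0
      · rw [hgp, zero_smul]
      · rw [if_neg, smul_zero]
        intro hface
        have hpS : p ∈ Finset.univ.filter (fun p => g p ≠ 0) :=
          Finset.mem_filter.2 ⟨Finset.mem_univ p, hgp⟩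
        have hwle := hp₀max p hpS
        -- derive contradiction from face structure
        obtain ⟨hpos, hcase⟩ := hface
        have e1 : ((basCell p).1.1.1 : ℕ) = (p.1.1 : ℕ) := rfl
        have e2 : ((basCell p).1.1.2.1 : ℕ) = (p.1.2.1 : ℕ) := rfl
        have e3 : ((basCell p).1.1.2.2 : ℕ) = (p.1.2.2 : ℕ) := rfl
        have f1 : (c₀.1.1.1 : ℕ) = (p₀.1.1 : ℕ) := rfl
        have f2 : (c₀.1.1.2.1 : ℕ) = (p₀.1.2.1 : ℕ) := rfl
        have f3 : (c₀.1.1.2.2 : ℕ) = (p₀.1.2.2 : ℕ) - 1 := rfl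
        rw [e1, e2, e3, f1, f2, f3] at hcase
        rcases hcase with ⟨h1, h2, h3'⟩ | ⟨h1, h2, h3'⟩ | ⟨h1, h2, h3'⟩
        · -- first coordinate incremented: wt p > wt p₀
          have : wt p₀ < wt p := by
            unfold wt
            rw [h1, h2, mul_add, mul_one]
            omega
          omega
        · have : wt p₀ < wt p := by
            unfold wt
            rw [h1, h2]
            omega
          omega
        · -- third coordinate: p = p₀
          apply hpne
          apply Subtype.ext
          have g3 : (p.1.2.2 : ℕ) = (p₀.1.2.2 : ℕ) := by omega
          ext
          · exact h1
          · exact h2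
          · exact g3
    · intro h
      exact absurd (Finset.mem_univ p₀) h
  rw [hsum] at heval
  exact hp₀ heval

def bN' (n s : ℕ) : ℕ := Fintype.card (IntT n s)

lemma rank_bdry (n t : ℕ) :
    Module.finrank (ZMod 2) (LinearMap.range (K4Boundary n t)) = bN' n (t+1) := by
  rw [range_eq_span, finrank_span_eq_card (vFam_indep n t), bN']

lemma finrank_fun (n s : ℕ) :
    Module.finrank (ZMod 2) (K4Cell n s → ZMod 2) = Fintype.card (K4Cell n s) :=
  Module.finrank_fintype_fun_eq_card _

set_option synthInstance.maxHeartbeats 1000000 in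
set_option maxHeartbeats 1000000 in
lemma finrank_homology (n t : ℕ) :
    Module.finrank (ZMod 2) (K4Homology n t)
      = Module.finrank (ZMod 2) (K4Cycles n t) - bN' n (t+1) := by
  have hle := range_le_cycles n t
  have hquot := Submodule.finrank_quotient_add_finrank
    (Submodule.comap (K4Cycles n t).subtype (LinearMap.range (K4Boundary n t)))
  have hcomap : Module.finrank (ZMod 2)
      (Submodule.comap (K4Cycles n t).subtype (LinearMap.range (K4Boundary n t)))
      = bN' n (t+1) := by
    rw [LinearEquiv.finrank_eq (Submodule.comapSubtypeEquivOfLe hle), rank_bdry]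
  have hh : Module.finrank (ZMod 2) (K4Homology n t)
      = Module.finrank (ZMod 2)
        ((K4Cycles n t) ⧸ (Submodule.comap (K4Cycles n t).subtype
          (LinearMap.range (K4Boundary n t)))) := rfl
  omega

def aN' (n t : ℕ) : ℕ := Fintype.card {p : Fin (n+1) × Fin (n+1) × Fin (n+1) //
  (p.1:ℕ) + (p.2.1:ℕ) + (p.2.2:ℕ) = t}

lemma cardCell (n t : ℕ) : Fintype.card (K4Cell n t) = aN' n t + bN' n t := by
  classical
  rw [show Fintype.card (K4Cell n t)
      = Fintype.card {c : (Fin (n + 1) × Fin (n + 1) × Fin (n + 1)) × Bool //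
        ((c.1.1 : ℕ) + (c.1.2.1 : ℕ) + (c.1.2.2 : ℕ) = t) ∧
        (c.2 = true → 0 < (c.1.1 : ℕ) ∧ 0 < (c.1.2.1 : ℕ) ∧ 0 < (c.1.2.2 : ℕ))}
    from Fintype.card_congr (Equiv.cast rfl)]
  rw [show bN' n t = Fintype.card {p : Fin (n+1) × Fin (n+1) × Fin (n+1) //
      ((p.1:ℕ) + (p.2.1:ℕ) + (p.2.2:ℕ) = t) ∧ 0 < (p.1:ℕ) ∧ 0 < (p.2.1:ℕ) ∧ 0 < (p.2.2:ℕ)}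
    from Fintype.card_congr (Equiv.cast rfl)]
  rw [aN', Fintype.card_subtype, Fintype.card_subtype, Fintype.card_subtype]
  rw [Finset.card_filter, Finset.card_filter, Finset.card_filter]
  rw [Fintype.sum_prod_type, ← Finset.sum_add_distrib]
  refine Finset.sum_congr rfl fun p _ => ?_
  rw [Fintype.sum_bool]
  by_cases h1 : (p.1:ℕ) + (p.2.1:ℕ) + (p.2.2:ℕ) = t
  · by_cases h2 : 0 < (p.1:ℕ) ∧ 0 < (p.2.1:ℕ) ∧ 0 < (p.2.2:ℕ)
    · rw [if_pos ⟨h1, fun _ => h2⟩, if_pos ⟨h1, fun _ => h2⟩, if_pos h1, if_pos ⟨h1, h2⟩]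
    · rw [if_neg (fun hc => h2 (hc.2 rfl)), if_pos ⟨h1, fun hb => absurd hb (by simp)⟩,
        if_pos h1, if_neg (fun hc => h2 hc.2)]
  · rw [if_neg (fun hc => h1 hc.1), if_neg (fun hc => h1 hc.1), if_neg h1,
      if_neg (fun hc => h1 hc.1)]

lemma bN'_zero (n : ℕ) : bN' n 0 = 0 := by
  rw [bN', Fintype.card_eq_zero_iff]
  constructor
  intro p
  have h1 := p.2.1
  have h2 := p.2.2
  omega

set_option synthInstance.maxHeartbeats 1000000 in
set_option maxHeartbeats 1000000 in
lemma finrank_cycles_zero (n : ℕ) :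
    Module.finrank (ZMod 2) (K4Cycles n 0) = aN' n 0 + bN' n 0 := by
  show Module.finrank (ZMod 2) (⊤ : Submodule (ZMod 2) (K4Cell n 0 → ZMod 2)) = _
  rw [finrank_top, finrank_fun, cardCell]

set_option synthInstance.maxHeartbeats 1000000 in
set_option maxHeartbeats 1000000 in
lemma finrank_cycles_succ (n s : ℕ) :
    Module.finrank (ZMod 2) (K4Cycles n (s+1)) = aN' n (s+1) := by
  have hrn := LinearMap.finrank_range_add_finrank_ker (K4Boundary n s)
  rw [finrank_fun, cardCell, rank_bdry] at hrn
  show Module.finrank (ZMod 2) (LinearMap.ker (K4Boundary n s)) = _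
  omega


def aN2 (n t : ℕ) : ℕ := Fintype.card {p : Fin (n+1) × Fin (n+1) × Fin (n+1) //
  (p.1:ℕ) + (p.2.1:ℕ) + (p.2.2:ℕ) = t}
def bN2 (n t : ℕ) : ℕ := Fintype.card {p : Fin (n+1) × Fin (n+1) × Fin (n+1) //
  ((p.1:ℕ) + (p.2.1:ℕ) + (p.2.2:ℕ) = t) ∧ 0 < (p.1:ℕ) ∧ 0 < (p.2.1:ℕ) ∧ 0 < (p.2.2:ℕ)}

lemma aN_eq (n t : ℕ) : aN2 n t = ∑ k ∈ range (n+1), ∑ l ∈ range (n+1), ∑ m ∈ range (n+1),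
    if k + l + m = t then 1 else 0 := by
  rw [aN2, Fintype.card_subtype, Finset.card_filter]
  simp only [Fintype.sum_prod_type, ← Fin.sum_univ_eq_sum_range]

lemma bN_eq (n t : ℕ) : bN2 n t = ∑ k ∈ range (n+1), ∑ l ∈ range (n+1), ∑ m ∈ range (n+1),
    if k + l + m = t ∧ 0 < k ∧ 0 < l ∧ 0 < m then 1 else 0 := by
  rw [bN2, Fintype.card_subtype, Finset.card_filter]
  simp only [Fintype.sum_prod_type, ← Fin.sum_univ_eq_sum_range]

lemma sumA_inner (N a t : ℕ) : (∑ m ∈ Finset.range N, if a + m = t then (1:ℕ) else 0) = if a ≤ t ∧ t - a < N then 1 else 0 := by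
  induction N with
  | zero => simp
  | succ N ih => rw [Finset.sum_range_succ, ih]; split_ifs <;> omega

lemma sumA_mid (N M a t : ℕ) : (∑ l ∈ Finset.range N, if a + l ≤ t ∧ t - (a + l) < M then (1:ℕ) else 0) = if a ≤ t then min N (t - a + 1) - min N (t + 1 - a - M) else 0 := by
  induction N with
  | zero => simp
  | succ N ih => rw [Finset.sum_range_succ, ih]; split_ifs <;> omega

lemma sumB_inner (N a s : ℕ) : (∑ m ∈ Finset.range N, if a + m = s ∧ 1 ≤ m then (1:ℕ) else 0) = if a < s ∧ s - a < N then 1 else 0 := by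
  induction N with
  | zero => simp
  | succ N ih => rw [Finset.sum_range_succ, ih]; split_ifs <;> omega

lemma sumB_mid (N M a s : ℕ) : (∑ l ∈ Finset.range N, if a + l < s ∧ s - (a + l) < M ∧ 1 ≤ l then (1:ℕ) else 0) = min N (s - a) - min N (max 1 (s + 1 - a - M)) := by
  induction N with
  | zero => simp
  | succ N ih => rw [Finset.sum_range_succ, ih]; split_ifs <;> omega

def gA (n t k : ℕ) : ℕ := if k ≤ t then min (n+1) (t - k + 1) - min (n+1) (t + 1 - k - (n+1)) else 0
def gB (n t k : ℕ) : ℕ := if 1 ≤ k then min (n+1) ((t+1) - k) - min (n+1) (max 1 ((t+1) + 1 - k - (n+1))) else 0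
def dd (n t k : ℕ) : ℕ := (if k = 0 then min t n + 1 - (t - n) else 0) + (if 1 ≤ k ∧ k ≤ t ∧ t - k ≤ 2*n then 1 else 0)

lemma perk (n t k : ℕ) : gA n t k = gB n t k + dd n t k := by
  unfold gA gB dd
  split_ifs <;> omega

lemma sumdd (n t : ℕ) : ∀ N, ∑ k ∈ range N, dd n t k = (if 1 ≤ N then min t n + 1 - (t - n) else 0) + (min N (t+1) - min N (max 1 (t - 2*n))) := by
  intro N
  induction N with
  | zero => simp
  | succ N ih =>
    rw [Finset.sum_range_succ, ih]
    unfold dd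
    split_ifs <;> omega

lemma aN_eq_gA (n t : ℕ) : aN2 n t = ∑ k ∈ range (n+1), gA n t k := by
  rw [aN_eq]
  refine Finset.sum_congr rfl fun k _ => ?_
  have h1 : ∀ l, (∑ m ∈ range (n+1), if k + l + m = t then (1:ℕ) else 0)
      = if (k + l) ≤ t ∧ t - (k + l) < (n+1) then 1 else 0 := fun l => sumA_inner (n+1) (k+l) t
  rw [Finset.sum_congr rfl fun l _ => h1 l, sumA_mid (n+1) (n+1) k t, gA]

lemma bN_eq_gB (n t : ℕ) : bN2 n (t+1) = ∑ k ∈ range (n+1), gB n t k := by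
  rw [bN_eq]
  refine Finset.sum_congr rfl fun k _ => ?_
  have h1 : ∀ l, (∑ m ∈ range (n+1), if k + l + m = t + 1 ∧ 0 < k ∧ 0 < l ∧ 0 < m then (1:ℕ) else 0)
      = if 1 ≤ k then (if (k + l) < t + 1 ∧ (t+1) - (k + l) < (n+1) ∧ 1 ≤ l then 1 else 0) else 0 := by
    intro l
    by_cases hk : 1 ≤ k
    · rw [if_pos hk]
      by_cases hl : 1 ≤ l
      · have e1 : (∑ m ∈ range (n+1), if k + l + m = t + 1 ∧ 0 < k ∧ 0 < l ∧ 0 < m then (1:ℕ) else 0)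
            = ∑ m ∈ range (n+1), if (k + l) + m = t + 1 ∧ 1 ≤ m then (1:ℕ) else 0 := by
          refine Finset.sum_congr rfl fun m _ => ?_
          refine if_congr ?_ rfl rfl
          constructor <;> intro h <;> [exact ⟨by omega, by omega⟩; omega]
        rw [e1, sumB_inner (n+1) (k+l) (t+1)]
        split_ifs <;> omega
      · rw [if_neg (by omega)]
        refine Finset.sum_eq_zero fun m _ => by rw [if_neg (by omega)]
    · rw [if_neg hk]
      refine Finset.sum_eq_zero fun m _ => by rw [if_neg (by omega)]
  rw [Finset.sum_congr rfl fun l _ => h1 l]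
  by_cases hk : 1 ≤ k
  · simp only [hk, if_true]
    rw [sumB_mid (n+1) (n+1) k (t+1), gB, if_pos hk]
  · simp only [hk, if_false]
    rw [gB, if_neg hk, Finset.sum_const_zero]

lemma count (n t : ℕ) (ht : t ≤ 3*n) :
    aN2 n t = bN2 n (t+1) + (if t ≤ n then 2*t+1 else 3*n+1-t) := by
  rw [aN_eq_gA, bN_eq_gB]
  have := Finset.sum_congr rfl fun k (_ : k ∈ range (n+1)) => perk n t k
  rw [this, Finset.sum_add_distrib, sumdd n t (n+1)]
  have h1 : (1:ℕ) ≤ n + 1 := by omega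
  simp only [h1, if_true]
  congr 1
  split_ifs <;> omega

end K4Aux

/-- For `K₄ = C₂ × C₂` and `V` the sum of the three sign representations,
the Bredon homology of `S^{nV}` with constant `𝔽₂` coefficients has `𝔽₂`-dimensions in degrees
`0, 1, …, 3n` given by `1, 3, 5, …, 2n−1, 2n+1, 2n, 2n−1, …, 2, 1`: the odd numbers up to
`2n+1` for `t ≤ n`, then the descending integers `3n+1−t` for `n ≤ t ≤ 3n`. -/


theorem stmt18 (n t : ℕ) (ht : t ≤ 3 * n) :
    Module.finrank (ZMod 2) (K4Homology n t) =
      if t ≤ n then 2 * t + 1 else 3 * n + 1 - t := by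
  have hbr : ∀ s, bN' n s = bN2 n s := fun s => Fintype.card_congr (Equiv.cast rfl)
  have har : ∀ s, aN' n s = aN2 n s := fun s => rfl
  rw [finrank_homology, hbr]
  cases t with
  | zero =>
    rw [finrank_cycles_zero, bN'_zero, har]
    have hc := count n 0 (by omega)
    rw [if_pos (Nat.zero_le n)] at hc ⊢
    omega
  | succ s =>
    rw [finrank_cycles_succ, har]
    have hc := count n (s+1) ht
    rcases le_or_gt (s+1) n with h | h
    · rw [if_pos h] at hc ⊢
      omega
    · rw [if_neg (by omega)] at hc ⊢
      omega
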